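/- For C_1, C_2 > 1 and w ≤ (C_1C_2 − C_1)/(C_1C_2 + C_2 − 1), the function λ ↦ w·p_1(λ) + p_2(λ) is maximized on [0,1] at λ = 0; for w ≥ (C_1C_2 + C_1 − 1)/(C_1C_2 − C_2), it is maximized at λ = 1; and for w = 1, it is maximized at λ = 1/2. -/

import Mathlib

/-- Equilibrium success probability of agent 1 under the SGE contract with split `l`. -/
noncomputable def P1 (C1 C2 l : ℝ) : ℝ := (C2 - (1 - l)) / (C1 * C2 - l * (1 - l))

/-- Equilibrium success probability of agent 2 under the SGE contract with split `l`. -/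
noncomputable def P2 (C1 C2 l : ℝ) : ℝ := (C1 - l) / (C1 * C2 - l * (1 - l))

theorem stmt10 (C1 C2 w : ℝ) (hC1 : 1 < C1) (hC2 : 1 < C2) (hw : 0 < w) :
    (w ≤ (C1 * C2 - C1) / (C1 * C2 + C2 - 1) →
      ∀ lam ∈ Set.Icc (0:ℝ) 1,
        w * P1 C1 C2 lam + P2 C1 C2 lam ≤ w * P1 C1 C2 0 + P2 C1 C2 0) ∧
    ((C1 * C2 + C1 - 1) / (C1 * C2 - C2) ≤ w →
      ∀ lam ∈ Set.Icc (0:ℝ) 1,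
        w * P1 C1 C2 lam + P2 C1 C2 lam ≤ w * P1 C1 C2 1 + P2 C1 C2 1) ∧
    (w = 1 →
      ∀ lam ∈ Set.Icc (0:ℝ) 1,
        w * P1 C1 C2 lam + P2 C1 C2 lam ≤ w * P1 C1 C2 (1 / 2) + P2 C1 C2 (1 / 2)) := by
  have hCC : 1 < C1 * C2 := by nlinarith
  refine ⟨?_, ?_, ?_⟩
  · intro hwle lam ⟨hl0, hl1⟩
    have hD : 0 < C1 * C2 - lam * (1 - lam) := by nlinarith
    have hD0 : 0 < C1 * C2 - 0 * (1 - 0) := by nlinarith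
    have hden : (0:ℝ) < C1 * C2 + C2 - 1 := by nlinarith
    have hkey : w * (C1 * C2 + C2 - 1) ≤ C1 * C2 - C1 :=
      (le_div_iff₀ hden).mp hwle
    have hN0 : 0 ≤ w * (C2 - 1) + C1 := by nlinarith
    unfold P1 P2
    rw [← mul_div_assoc, ← mul_div_assoc, ← add_div, ← add_div,
      div_le_div_iff₀ hD hD0]
    nlinarith [mul_nonneg hl0 (sub_nonneg.2 hkey),
      mul_nonneg (mul_nonneg hl0 hl0) hN0]
  · intro hwge lam ⟨hl0, hl1⟩
    have hD : 0 < C1 * C2 - lam * (1 - lam) := by nlinarith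
    have hD1 : 0 < C1 * C2 - 1 * (1 - 1) := by nlinarith
    have hden : (0:ℝ) < C1 * C2 - C2 := by nlinarith
    have hkey : C1 * C2 + C1 - 1 ≤ w * (C1 * C2 - C2) :=
      (div_le_iff₀ hden).mp hwge
    have hN1 : 0 ≤ w * C2 + C1 - 1 := by nlinarith
    unfold P1 P2
    rw [← mul_div_assoc, ← mul_div_assoc, ← add_div, ← add_div,
      div_le_div_iff₀ hD hD1]
    nlinarith [mul_nonneg (sub_nonneg.2 hl1) (sub_nonneg.2 hkey),
      mul_nonneg (mul_nonneg (sub_nonneg.2 hl1) (sub_nonneg.2 hl1)) hN1]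
  · intro hw1 lam ⟨hl0, hl1⟩
    subst hw1
    have hD : 0 < C1 * C2 - lam * (1 - lam) := by nlinarith
    have hDh : 0 < C1 * C2 - 1 / 2 * (1 - 1 / 2) := by nlinarith
    have hN : (0:ℝ) ≤ C1 + C2 - 1 := by nlinarith
    unfold P1 P2
    rw [← mul_div_assoc, ← mul_div_assoc, ← add_div, ← add_div,
      div_le_div_iff₀ hD hDh]
    nlinarith [mul_nonneg (sq_nonneg (lam - 1 / 2)) hN]
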